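/- arXiv:1609.05203 — 6 statements merged into one kernel-verified Lean document; each statement's English description precedes it below -/
import Mathlib

section
/- If T = S + D is invertible (as a bounded operator), then for every i ∈ ℤ one has d_i · ⟨T⁻¹ e_i, e_i⟩ = d_0 · ⟨T⁻¹ e_0, e_0⟩; that is, the quantity d_i ⟨T⁻¹ e_i, e_i⟩ is independent of i. -/
/-- If `T = S + D` (weighted shift plus diagonal) is invertible as a bounded operator,
then the quantity `d_i ⟨T⁻¹ e_i, e_i⟩` (the `i`-th diagonal coordinate of `T⁻¹`
multiplied by `d_i`) is independent of `i`. -/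
theorem diag_coeff_const_of_perturbed_shift_invertible
    {X : Type*} [NormedAddCommGroup X] [InnerProductSpace ℂ X] [CompleteSpace X]
    (e : HilbertBasis ℤ ℂ X) (w d : ℤ → ℂ)
    (S D : X →L[ℂ] X)
    (hS : ∀ i : ℤ, S (e i) = w i • e (i + 1))
    (hD : ∀ i : ℤ, D (e i) = d i • e i)
    (Tinv : X →L[ℂ] X)
    (h1 : (S + D) ∘L Tinv = 1) (h2 : Tinv ∘L (S + D) = 1) :
    ∀ i : ℤ, d i * e.repr (Tinv (e i)) i = d 0 * e.repr (Tinv (e 0)) 0 := by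
  have hinner : ∀ i j : ℤ, (inner ℂ (e i) (e j) : ℂ) = if i = j then 1 else 0 :=
    orthonormal_iff_ite.mp e.orthonormal
  have hdense : Dense (Submodule.span ℂ (Set.range (e : ℤ → X)) : Set X) :=
    Submodule.dense_iff_topologicalClosure_eq_top.mpr e.dense_span
  have hSadj : ∀ j : ℤ, (innerSL ℂ (e (j+1))).comp S = (w j) • innerSL ℂ (e j) := by
    intro j
    refine ContinuousLinearMap.ext_on hdense ?_
    rintro x ⟨k, rfl⟩
    simp only [ContinuousLinearMap.comp_apply, innerSL_apply_apply, hS, inner_smul_right,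
      ContinuousLinearMap.smul_apply, smul_eq_mul, hinner]
    rcases eq_or_ne k j with rfl | hk
    · simp
    · simp [Ne.symm hk]
  have hDadj : ∀ j : ℤ, (innerSL ℂ (e j)).comp D = (d j) • innerSL ℂ (e j) := by
    intro j
    refine ContinuousLinearMap.ext_on hdense ?_
    rintro x ⟨k, rfl⟩
    simp only [ContinuousLinearMap.comp_apply, innerSL_apply_apply, hD, inner_smul_right,
      ContinuousLinearMap.smul_apply, smul_eq_mul, hinner]
    rcases eq_or_ne j k with rfl | hk
    · simp
    · simp [hk]
  have key : ∀ i : ℤ, d (i+1) * e.repr (Tinv (e (i+1))) (i+1) = d i * e.repr (Tinv (e i)) i := by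
    intro i
    -- relation 1 : from Tinv ∘ T = 1
    have r1 : w i * inner ℂ (e i) (Tinv (e (i+1))) + d i * inner ℂ (e i) (Tinv (e i)) = (1:ℂ) := by
      have hx : Tinv ((S + D) (e i)) = e i := by
        have := congrFun (congrArg DFunLike.coe h2) (e i)
        simpa using this
      have hT : (S + D) (e i) = w i • e (i+1) + d i • e i := by
        rw [ContinuousLinearMap.add_apply, hS, hD]
      have hx2 : w i • Tinv (e (i+1)) + d i • Tinv (e i) = e i := by
        have hlin : Tinv ((S + D) (e i)) = w i • Tinv (e (i+1)) + d i • Tinv (e i) := by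
          rw [hT, map_add, map_smul, map_smul]
        rw [← hlin]; exact hx
      have := congrArg (fun z => (inner ℂ (e i) z : ℂ)) hx2
      simpa [inner_add_right, inner_smul_right, hinner, e.orthonormal.1 i] using this
    -- relation 2 : from T ∘ Tinv = 1
    have r2 : w i * inner ℂ (e i) (Tinv (e (i+1))) + d (i+1) * inner ℂ (e (i+1)) (Tinv (e (i+1))) = (1:ℂ) := by
      have hx : (S + D) (Tinv (e (i+1))) = e (i+1) := by
        have := congrFun (congrArg DFunLike.coe h1) (e (i+1))
        simpa using this
      have h3 := congrArg (fun z => (innerSL ℂ (e (i+1))) z) hx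
      simp only [ContinuousLinearMap.add_apply, innerSL_apply_apply, inner_add_right] at h3
      have hs := congrFun (congrArg DFunLike.coe (hSadj i)) (Tinv (e (i+1)))
      have hd := congrFun (congrArg DFunLike.coe (hDadj (i+1))) (Tinv (e (i+1)))
      simp only [ContinuousLinearMap.comp_apply, innerSL_apply_apply,
        ContinuousLinearMap.smul_apply, smul_eq_mul] at hs hd
      rw [hs, hd] at h3
      rw [h3, hinner]
      simp
    rw [e.repr_apply_apply, e.repr_apply_apply]
    linear_combination r2 - r1
  intro i
  induction i using Int.induction_on with
  | zero => rfl
  | succ n ih => rw [key n]; exact ih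
  | pred n ih =>
      have h := key (-(n:ℤ) - 1)
      have hn1 : (-(n:ℤ) - 1) + 1 = -n := by ring
      rw [hn1] at h
      rw [h] at ih
      exact ih
end

section
/- Suppose T = S + D is invertible and write a_j^i = ⟨T⁻¹ e_i, e_j⟩. Then for every i ∈ ℤ and every integer k > 0, assuming all weights w_{i-1},…,w_{i-k} are nonzero, one has a_{i-k}^i = (−1)^{k+1} (1 − d_i a_i^i) · ∏_{m=1}^{k-1} d_{i-m} / ∏_{m=1}^{k} w_{i-m} (with the convention ∏_{m=1}^{0} d_{i-m} = 1). -/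
open Finset

/-- Let `T = S + D` be invertible with inverse `Tinv`, and write `a_j^i = ⟨T⁻¹ e_i, e_j⟩`
(the `j`-th coordinate of `T⁻¹ e_i`). For `i ∈ ℤ` and `k > 0`, if the weights
`w_{i-1}, …, w_{i-k}` are nonzero, then
`a_{i-k}^i = (-1)^{k+1} (1 - d_i a_i^i) ∏_{m=1}^{k-1} d_{i-m} / ∏_{m=1}^{k} w_{i-m}`. -/
theorem perturbed_shift_inverse_lower_coeff
    {X : Type*} [NormedAddCommGroup X] [InnerProductSpace ℂ X] [CompleteSpace X]
    (e : HilbertBasis ℤ ℂ X) (w d : ℤ → ℂ)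
    (S D : X →L[ℂ] X)
    (hS : ∀ i : ℤ, S (e i) = w i • e (i + 1))
    (hD : ∀ i : ℤ, D (e i) = d i • e i)
    (Tinv : X →L[ℂ] X)
    (h1 : (S + D) ∘L Tinv = 1) (h2 : Tinv ∘L (S + D) = 1)
    (i : ℤ) (k : ℕ) (hk : 0 < k)
    (hw : ∀ m : ℕ, 1 ≤ m → m ≤ k → w (i - m) ≠ 0) :
    e.repr (Tinv (e i)) (i - k)
      = (-1 : ℂ) ^ (k + 1) * (1 - d i * e.repr (Tinv (e i)) i)
          * (∏ m ∈ Finset.Icc 1 (k - 1), d (i - m))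
          / (∏ m ∈ Finset.Icc 1 k, w (i - m)) := by
  have hON := orthonormal_iff_ite.mp e.orthonormal
  -- coordinate formula for S
  have reprS : ∀ (x : X) (j : ℤ), e.repr (S x) j = w (j-1) * e.repr x (j-1) := by
    intro x j
    have h := (e.hasSum_repr x).mapL S
    have h2' : HasSum (fun n : ℤ => (e.repr x n * w n) • e (n+1)) (S x) := by
      convert h using 2 with n
      simp [hS, smul_smul]
    have h3 := h2'.mapL (innerSL ℂ (e j))
    have h4 : HasSum (fun n : ℤ => if n = j - 1 then w (j-1) * e.repr x (j-1) else 0)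
        (inner ℂ (e j) (S x) : ℂ) := by
      convert h3 using 2 with n
      · rfl
      swap
      · rw [innerSL_apply_apply]
      rw [innerSL_apply_apply, inner_smul_right, hON]
      by_cases hn : n = j - 1
      · subst hn; simp [mul_comm]
      · have : j ≠ n + 1 := by omega
        simp [this, hn]
    have h5 : HasSum (fun n : ℤ => if n = j - 1 then w (j-1) * e.repr x (j-1) else 0)
        (w (j-1) * e.repr x (j-1)) := hasSum_ite_eq _ _
    rw [e.repr_apply_apply, h4.unique h5]
  have reprD : ∀ (x : X) (j : ℤ), e.repr (D x) j = d j * e.repr x j := by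
    intro x j
    have h := (e.hasSum_repr x).mapL D
    have h2' : HasSum (fun n : ℤ => (e.repr x n * d n) • e n) (D x) := by
      convert h using 2 with n
      simp [hD, smul_smul]
    have h3 := h2'.mapL (innerSL ℂ (e j))
    have h4 : HasSum (fun n : ℤ => if n = j then d j * e.repr x j else 0)
        (inner ℂ (e j) (D x) : ℂ) := by
      convert h3 using 2 with n
      · rfl
      swap
      · rw [innerSL_apply_apply]
      rw [innerSL_apply_apply, inner_smul_right, hON]
      by_cases hn : n = j
      · subst hn; simp [mul_comm]
      · simp [hn, Ne.symm hn]
    rw [e.repr_apply_apply, h4.unique (hasSum_ite_eq _ _)]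
  set a : ℤ → ℂ := fun j => e.repr (Tinv (e i)) j with ha
  have key : ∀ j : ℤ, w (j-1) * a (j-1) + d j * a j = if j = i then 1 else 0 := by
    intro j
    have hT : S (Tinv (e i)) + D (Tinv (e i)) = e i := by
      have := congrArg (fun f : X →L[ℂ] X => f (e i)) h1
      simpa using this
    have := congrArg (fun v : X => e.repr v j) hT
    simp only [map_add, lp.coeFn_add, Pi.add_apply] at this
    rw [reprS, reprD] at this
    rw [this, e.repr_apply_apply, hON]
  -- induction on k
  induction k with
  | zero => omega
  | succ n ih =>
    rcases Nat.eq_zero_or_pos n with hn | hn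
    · subst hn
      -- base case k = 1
      have h := key i
      have := key i
      have hw1 : w (i - 1) ≠ 0 := by simpa using hw 1 le_rfl le_rfl
      have hb : w (i-1) * a (i-1) + d i * a i = 1 := by simpa using key i
      have : a (i-1) = (1 - d i * a i) / w (i-1) := by
        field_simp
        linear_combination hb
      simpa using this
    · -- step
      have hwn : ∀ m : ℕ, 1 ≤ m → m ≤ n → w (i - m) ≠ 0 := fun m h1 h2 => hw m h1 (by omega)
      have ihn := ih hn hwn
      have hkey := key (i - n)
      have hne : (i - (n:ℤ)) ≠ i := by omega
      rw [if_neg hne] at hkey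
      have hwn1 : w (i - (n+1:ℕ)) ≠ 0 := hw (n+1) (by omega) le_rfl
      have harg : (i - (n:ℤ)) - 1 = i - ((n:ℕ)+1:ℕ) := by push_cast; ring
      rw [harg] at hkey
      -- a (i - (n+1)) = - d (i-n) * a (i-n) / w (i-(n+1))
      have hstep : a (i - ((n:ℕ)+1:ℕ)) = - d (i - n) * a (i - n) / w (i - ((n:ℕ)+1:ℕ)) := by
        rw [eq_div_iff hwn1]
        linear_combination hkey
      have ihn' : a (i - n) = ((-1:ℂ) ^ (n + 1) * (1 - d i * a i) *
            ∏ m ∈ Finset.Icc 1 (n - 1), d (i - m)) / ∏ m ∈ Finset.Icc 1 n, w (i - m) := ihn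
      show a (i - ((n:ℕ)+1:ℕ)) = _
      rw [hstep, ihn']
      have hprodd : (∏ m ∈ Finset.Icc 1 ((n+1) - 1), d (i - m))
          = (∏ m ∈ Finset.Icc 1 (n - 1), d (i - m)) * d (i - n) := by
        rw [Nat.add_sub_cancel]
        rw [show n = (n-1) + 1 by omega, Finset.prod_Icc_succ_top (by omega)]
        congr 2 <;> omega
      have hprodw : (∏ m ∈ Finset.Icc 1 (n+1), w (i - m))
          = (∏ m ∈ Finset.Icc 1 n, w (i - m)) * w (i - ((n:ℕ)+1:ℕ)) := by
        rw [Finset.prod_Icc_succ_top (by omega)]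
      have hwprod : (∏ m ∈ Finset.Icc 1 n, w (i - m)) ≠ 0 := by
        rw [Finset.prod_ne_zero_iff]
        intro m hm
        exact hwn m (Finset.mem_Icc.mp hm).1 (Finset.mem_Icc.mp hm).2
      rw [hprodd, hprodw]
      field_simp
      ring
end

section
/- Suppose T = S + D is invertible and write a_j^i = ⟨T⁻¹ e_i, e_j⟩. Then for every i ∈ ℤ and every integer k > 0, assuming all diagonal entries d_i,…,d_{i+k} are nonzero, one has a_{i+k}^i = (−1)^{k} d_i a_i^i · ∏_{m=0}^{k-1} w_{i+m} / ∏_{m=0}^{k} d_{i+m}. -/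
open Finset

local notation "⟪" x ", " y "⟫" => @inner ℂ _ _ x y

lemma repr_S {X : Type*} [NormedAddCommGroup X] [InnerProductSpace ℂ X] [CompleteSpace X]
    (e : HilbertBasis ℤ ℂ X) (w : ℤ → ℂ) (S : X →L[ℂ] X)
    (hS : ∀ i : ℤ, S (e i) = w i • e (i + 1)) (x : X) (m : ℤ) :
    e.repr (S x) m = w (m - 1) * e.repr x (m - 1) := by
  have h := e.hasSum_repr x
  have h2 : HasSum (fun j => e.repr x j • (w j • e (j+1))) (S x) := by
    have := S.hasSum h
    simpa [hS] using this
  have h3 : HasSum (fun j => ⟪e m, e.repr x j • (w j • e (j+1))⟫) ⟪e m, S x⟫ :=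
    (innerSL ℂ (e m)).hasSum h2
  have horth := e.orthonormal
  have h4 : HasSum (fun j : ℤ => if j = m - 1 then w (m-1) * e.repr x (m-1) else 0)
      ⟪e m, S x⟫ := by
    refine h3.congr_fun fun j => ?_
    rw [inner_smul_right, inner_smul_right, orthonormal_iff_ite.mp horth]
    by_cases hj : j = m - 1
    · subst hj; simp [sub_add_cancel]; ring
    · have : m ≠ j + 1 := by omega
      simp [this, hj]
  have := h4.unique (hasSum_ite_eq (m-1) (w (m-1) * e.repr x (m-1)))
  rw [e.repr_apply_apply, this, e.repr_apply_apply]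

lemma repr_D {X : Type*} [NormedAddCommGroup X] [InnerProductSpace ℂ X] [CompleteSpace X]
    (e : HilbertBasis ℤ ℂ X) (d : ℤ → ℂ) (D : X →L[ℂ] X)
    (hD : ∀ i : ℤ, D (e i) = d i • e i) (x : X) (m : ℤ) :
    e.repr (D x) m = d m * e.repr x m := by
  have h := e.hasSum_repr x
  have h2 : HasSum (fun j => e.repr x j • (d j • e j)) (D x) := by
    have := D.hasSum h
    simpa [hD] using this
  have h3 : HasSum (fun j => ⟪e m, e.repr x j • (d j • e j)⟫) ⟪e m, D x⟫ :=
    (innerSL ℂ (e m)).hasSum h2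
  have horth := e.orthonormal
  have h4 : HasSum (fun j : ℤ => if j = m then d m * e.repr x m else 0) ⟪e m, D x⟫ := by
    refine h3.congr_fun fun j => ?_
    rw [inner_smul_right, inner_smul_right, orthonormal_iff_ite.mp horth]
    by_cases hj : j = m
    · subst hj; simp; ring
    · simp [hj, Ne.symm hj]
  have := h4.unique (hasSum_ite_eq m (d m * e.repr x m))
  rw [e.repr_apply_apply, this, e.repr_apply_apply]

/-- Let `T = S + D` be invertible with inverse `Tinv`, and write `a_j^i = ⟨T⁻¹ e_i, e_j⟩`
(the `j`-th coordinate of `T⁻¹ e_i`). For `i ∈ ℤ` and `k > 0`, if the diagonal entries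
`d_i, …, d_{i+k}` are nonzero, then
`a_{i+k}^i = (-1)^k d_i a_i^i ∏_{m=0}^{k-1} w_{i+m} / ∏_{m=0}^{k} d_{i+m}`. -/
theorem perturbed_shift_inverse_upper_coeff
    {X : Type*} [NormedAddCommGroup X] [InnerProductSpace ℂ X] [CompleteSpace X]
    (e : HilbertBasis ℤ ℂ X) (w d : ℤ → ℂ)
    (S D : X →L[ℂ] X)
    (hS : ∀ i : ℤ, S (e i) = w i • e (i + 1))
    (hD : ∀ i : ℤ, D (e i) = d i • e i)
    (Tinv : X →L[ℂ] X)
    (h1 : (S + D) ∘L Tinv = 1) (h2 : Tinv ∘L (S + D) = 1)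
    (i : ℤ) (k : ℕ) (hk : 0 < k)
    (hd : ∀ m : ℕ, m ≤ k → d (i + m) ≠ 0) :
    e.repr (Tinv (e i)) (i + k)
      = (-1 : ℂ) ^ k * (d i * e.repr (Tinv (e i)) i)
          * (∏ m ∈ Finset.range k, w (i + m))
          / (∏ m ∈ Finset.range (k + 1), d (i + m)) := by
  set x := Tinv (e i) with hx
  have key : ∀ m : ℤ, m ≠ i →
      w (m - 1) * e.repr x (m - 1) + d m * e.repr x m = 0 := by
    intro m hm
    have hTx : S x + D x = e i := by
      have := congrFun (congrArg (fun (f : X →L[ℂ] X) => f.toFun) h1) (e i)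
      simpa using this
    have heq : e.repr (S x + D x) m = e.repr (e i) m := by rw [hTx]
    rw [map_add] at heq
    have hrs := repr_S e w S hS x m
    have hrd := repr_D e d D hD x m
    have hei : e.repr (e i) m = 0 := by
      rw [e.repr_apply_apply, orthonormal_iff_ite.mp e.orthonormal]
      simp [hm]
    simp only [lp.coeFn_add, Pi.add_apply] at heq
    rw [hrs, hrd, hei] at heq
    exact heq
  induction k with
  | zero => omega
  | succ n ih =>
    have hcast : (i + ((n : ℤ) + 1)) = i + (n : ℤ) + 1 := by ring
    have hk2 := key (i + (n : ℤ) + 1) (by omega)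
    simp only [add_sub_cancel_right] at hk2
    have hdn : d (i + (n : ℤ) + 1) ≠ 0 := by
      have := hd (n + 1) le_rfl
      push_cast at this
      rwa [hcast] at this
    have hrec : e.repr x (i + (n : ℤ) + 1)
        = -w (i + (n : ℤ)) * e.repr x (i + (n : ℤ)) / d (i + (n : ℤ) + 1) := by
      field_simp
      linear_combination hk2
    push_cast
    rw [hcast, hrec]
    rcases Nat.eq_zero_or_pos n with hn | hn
    · subst hn
      have hd0 : d i ≠ 0 := by have := hd 0 (by omega); push_cast at this; simpa using this
      simp only [Nat.cast_zero, add_zero] at hdn ⊢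
      simp only [Finset.prod_range_succ, Finset.prod_range_one, Finset.prod_range_zero,
        Nat.cast_zero, add_zero, one_mul, zero_add, pow_one, Nat.cast_one]
      rw [div_eq_div_iff hdn (mul_ne_zero hd0 hdn)]
      ring
    · have ihn := ih hn (fun m hm => hd m (by omega))
      push_cast at ihn
      have hprod : (∏ m ∈ Finset.range (n + 1), d (i + (m : ℤ))) ≠ 0 := by
        rw [Finset.prod_ne_zero_iff]
        intro m hm
        exact hd m (by simp at hm; omega)
      rw [ihn, Finset.prod_range_succ, Finset.prod_range_succ
        (fun m : ℕ => d (i + (m : ℤ))) (n + 1)]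
      push_cast
      have hPn : (∏ m ∈ Finset.range n, d (i + (m : ℤ))) ≠ 0 := by
        rw [Finset.prod_ne_zero_iff]
        intro m hm
        exact hd m (by simp at hm; omega)
      have hdin : d (i + (n : ℤ)) ≠ 0 := hd n (by omega)
      have hden : (∏ m ∈ Finset.range n, d (i + (m : ℤ))) * d (i + (n : ℤ))
          * d (i + (n : ℤ) + 1) ≠ 0 := mul_ne_zero (mul_ne_zero hPn hdin) hdn
      rw [hcast, ← mul_div_assoc, div_div,
        Finset.prod_range_succ (fun m : ℕ => d (i + (m : ℤ))) n,
        Finset.prod_range_succ (fun m : ℕ => w (i + (m : ℤ))) n]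
      rw [div_eq_div_iff hden hden]
      ring
end

section
/- If T = S + D is invertible (as a bounded operator) and all w_i and d_i are nonzero, then at least one of the following two inequalities holds: R⁺ = limsup_{k→∞} [sup_{i∈ℤ} |∏_{m=0}^{k-1} w_{i+m} / ∏_{m=0}^{k} d_{i+m}|]^{1/k} ≤ 1, or R⁻ = limsup_{k→∞} [sup_{i∈ℤ} |∏_{m=1}^{k-1} d_{i-m} / ∏_{m=1}^{k} w_{i-m}|]^{1/k} ≤ 1. -/
open Finset Filter ENNReal

local notation "⟪" x ", " y "⟫" => @inner ℂ _ _ x y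

private lemma aux_limsup (f : ℕ → ℝ≥0∞) (M : NNReal) (hf : ∀ᶠ k in atTop, f k ≤ (M : ℝ≥0∞)) :
    Filter.limsup (fun k : ℕ => f k ^ (1 / (k : ℝ))) Filter.atTop ≤ 1 := by
  set r : NNReal := max M 1 with hr
  have hr1 : (1 : NNReal) ≤ r := le_max_right _ _
  have hrpos : (0:ℝ) < (r:ℝ) := lt_of_lt_of_le one_pos (by exact_mod_cast hr1)
  have h1 : ∀ᶠ k in atTop, f k ^ (1/(k:ℝ)) ≤ ((r : ℝ≥0∞)) ^ (1/(k:ℝ)) := by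
    filter_upwards [hf] with k hk
    exact ENNReal.rpow_le_rpow (hk.trans (by exact_mod_cast le_max_left _ _)) (by positivity)
  have hreal : Tendsto (fun k : ℕ => (r:ℝ) ^ (1/(k:ℝ))) atTop (nhds 1) := by
    have h0 : Tendsto (fun k : ℕ => Real.log r * (1/(k:ℝ))) atTop (nhds 0) := by
      simpa using tendsto_one_div_atTop_nhds_zero_nat.const_mul (Real.log r)
    have := (Real.continuous_exp.tendsto 0).comp h0
    simp only [Function.comp_def] at this
    convert this using 2 with k
    · exact (Real.rpow_def_of_pos hrpos _).trans rfl
    · simp [Real.exp_zero]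
  have h2 : Tendsto (fun k : ℕ => ((r : ℝ≥0∞)) ^ (1/(k:ℝ))) atTop (nhds 1) := by
    have hrne : r ≠ 0 := by positivity
    have : ∀ k : ℕ, ((r : ℝ≥0∞)) ^ (1/(k:ℝ)) = ((r ^ (1/(k:ℝ)) : NNReal) : ℝ≥0∞) := fun k =>
      (ENNReal.coe_rpow_of_ne_zero hrne _).symm
    simp only [this]
    rw [show (1 : ℝ≥0∞) = ((1 : NNReal) : ℝ≥0∞) by simp]
    rw [ENNReal.tendsto_coe]
    rw [← NNReal.tendsto_coe]
    simpa [NNReal.coe_rpow] using hreal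
  calc limsup (fun k : ℕ => f k ^ (1/(k:ℝ))) atTop
      ≤ limsup (fun k : ℕ => ((r : ℝ≥0∞)) ^ (1/(k:ℝ))) atTop := Filter.limsup_le_limsup h1
    _ = 1 := h2.limsup_eq

private lemma aux_int_const' {f : ℤ → ℂ} (h : ∀ i, f (i + 1) = f i) : ∀ i, f i = f 0 := by
  intro i
  induction i using Int.induction_on with
  | zero => rfl
  | succ n ih => rw [h]; exact ih
  | pred n ih => rw [← h (-(n : ℤ) - 1), sub_add_cancel]; exact ih

private lemma aux_dense' {X : Type*} [NormedAddCommGroup X] [InnerProductSpace ℂ X]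
    [CompleteSpace X] (e : HilbertBasis ℤ ℂ X) :
    Dense (↑(Submodule.span ℂ (Set.range (⇑e))) : Set X) := by
  have := e.dense_span
  rwa [SetLike.ext'_iff, Submodule.topologicalClosure_coe, Submodule.top_coe,
    ← dense_iff_closure_eq] at this

private lemma aux_inner_S' {X : Type*} [NormedAddCommGroup X] [InnerProductSpace ℂ X]
    [CompleteSpace X] (e : HilbertBasis ℤ ℂ X) (w : ℤ → ℂ) (S : X →L[ℂ] X)
    (hS : ∀ i : ℤ, S (e i) = w i • e (i + 1)) (j : ℤ) (x : X) :
    ⟪(e j : X), S x⟫ = w (j-1) * ⟪(e (j-1) : X), x⟫ := by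
  have h : (innerSL ℂ (e j : X)).comp S = w (j-1) • (innerSL ℂ (e (j-1) : X)) := by
    refine ContinuousLinearMap.ext_on (aux_dense' e) ?_
    rintro _ ⟨i, rfl⟩
    have hee : ∀ a b : ℤ, ⟪(e a : X), (e b : X)⟫ = if a = b then 1 else 0 :=
      orthonormal_iff_ite.mp e.orthonormal
    simp only [ContinuousLinearMap.comp_apply, ContinuousLinearMap.smul_apply, innerSL_apply_apply,
      hS, inner_smul_right, hee, smul_eq_mul]
    rcases eq_or_ne j (i+1) with h | h
    · rw [if_pos h, if_pos (show j - 1 = i by omega)]; rw [h]; ring_nf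
    · rw [if_neg h, if_neg (show ¬ j - 1 = i by omega)]; ring_nf
  have := congrArg (fun f => f x) h
  simpa using this

private lemma aux_inner_D' {X : Type*} [NormedAddCommGroup X] [InnerProductSpace ℂ X]
    [CompleteSpace X] (e : HilbertBasis ℤ ℂ X) (d : ℤ → ℂ) (D : X →L[ℂ] X)
    (hD : ∀ i : ℤ, D (e i) = d i • e i) (j : ℤ) (x : X) :
    ⟪(e j : X), D x⟫ = d j * ⟪(e j : X), x⟫ := by
  have h : (innerSL ℂ (e j : X)).comp D = d j • (innerSL ℂ (e j : X)) := by
    refine ContinuousLinearMap.ext_on (aux_dense' e) ?_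
    rintro _ ⟨i, rfl⟩
    have hee : ∀ a b : ℤ, ⟪(e a : X), (e b : X)⟫ = if a = b then 1 else 0 :=
      orthonormal_iff_ite.mp e.orthonormal
    simp only [ContinuousLinearMap.comp_apply, ContinuousLinearMap.smul_apply, innerSL_apply_apply,
      hD, inner_smul_right, hee, smul_eq_mul]
    rcases eq_or_ne j i with h | h
    · subst h; ring_nf
    · rw [if_neg h]; ring_nf
  have := congrArg (fun f => f x) h
  simpa using this

private lemma aux_fwd' (w d : ℤ → ℂ) (α : ℤ → ℤ → ℂ) (t : ℂ) (ht : ∀ i, d i * α i i = t)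
    (row : ∀ j i : ℤ, w (j-1) * α (j-1) i + d j * α j i = if j = i then 1 else 0) :
    ∀ (k : ℕ) (i : ℤ), (∏ m ∈ range k, w (i + m)) * t
      = (-1 : ℂ)^k * (∏ m ∈ range (k+1), d (i + m)) * α (i + k) i := by
  intro k
  induction k with
  | zero =>
      intro i
      simp only [range_zero, prod_empty, one_mul, pow_zero, zero_add, prod_range_one,
        Nat.cast_zero, add_zero]
      exact (ht i).symm
  | succ k ih =>
      intro i
      have r1 := row (i + (k : ℤ) + 1) i
      rw [if_neg (by omega)] at r1
      rw [show i + (k : ℤ) + 1 - 1 = i + k from by ring] at r1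
      rw [prod_range_succ, prod_range_succ]
      push_cast
      rw [show i + ((k:ℤ) + 1) = i + (k:ℤ) + 1 from by ring]
      linear_combination w (i + (k:ℤ)) * ih i
        + (-1:ℂ)^k * (∏ m ∈ range (k+1), d (i + (m:ℤ))) * r1

private lemma aux_bwd' (w d : ℤ → ℂ) (α : ℤ → ℤ → ℂ) (t : ℂ) (ht : ∀ i, d i * α i i = t)
    (row : ∀ j i : ℤ, w (j-1) * α (j-1) i + d j * α j i = if j = i then 1 else 0) :
    ∀ (k : ℕ) (i : ℤ), (∏ m ∈ range k, d (i - 1 - m)) * (1 - t)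
      = (-1 : ℂ)^k * (∏ m ∈ range (k+1), w (i - 1 - m)) * α (i - 1 - k) i := by
  intro k
  induction k with
  | zero =>
      intro i
      simp only [range_zero, prod_empty, one_mul, pow_zero, zero_add, prod_range_one,
        Nat.cast_zero, sub_zero]
      have r0 := row i i
      rw [if_pos rfl] at r0
      linear_combination ht i - r0
  | succ k ih =>
      intro i
      have r1 := row (i - 1 - (k : ℤ)) i
      rw [if_neg (by omega)] at r1
      rw [prod_range_succ, prod_range_succ]
      push_cast
      rw [show i - 1 - ((k:ℤ) + 1) = i - 1 - (k:ℤ) - 1 from by ring]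
      linear_combination d (i - 1 - (k:ℤ)) * ih i
        + (-1:ℂ)^k * (∏ m ∈ range (k+1), w (i - 1 - (m:ℤ))) * r1

/-- Lemma 6 of the paper: if `T = S + D` (weighted shift plus diagonal, all weights and
diagonal entries nonzero) is invertible as a bounded operator, then at least one of
`R⁺ ≤ 1` or `R⁻ ≤ 1` holds, where
`R⁺ = limsup_k [sup_i |∏_{m=0}^{k-1} w_{i+m} / ∏_{m=0}^{k} d_{i+m}|]^{1/k}` and
`R⁻ = limsup_k [sup_i |∏_{m=1}^{k-1} d_{i-m} / ∏_{m=1}^{k} w_{i-m}|]^{1/k}`. -/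
theorem perturbed_shift_invertible_R_le_one
    {X : Type*} [NormedAddCommGroup X] [InnerProductSpace ℂ X] [CompleteSpace X]
    (e : HilbertBasis ℤ ℂ X) (w d : ℤ → ℂ)
    (hw : ∀ i : ℤ, w i ≠ 0) (hd : ∀ i : ℤ, d i ≠ 0)
    (S D : X →L[ℂ] X)
    (hS : ∀ i : ℤ, S (e i) = w i • e (i + 1))
    (hD : ∀ i : ℤ, D (e i) = d i • e i)
    (hT : IsUnit (S + D)) :
    Filter.limsup (fun k : ℕ =>
        (⨆ i : ℤ, (‖(∏ m ∈ Finset.range k, w (i + m)) /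
            (∏ m ∈ Finset.range (k + 1), d (i + m))‖₊ : ℝ≥0∞)) ^ (1 / (k : ℝ)))
      Filter.atTop ≤ 1 ∨
    Filter.limsup (fun k : ℕ =>
        (⨆ i : ℤ, (‖(∏ m ∈ Finset.Icc 1 (k - 1), d (i - m)) /
            (∏ m ∈ Finset.Icc 1 k, w (i - m))‖₊ : ℝ≥0∞)) ^ (1 / (k : ℝ)))
      Filter.atTop ≤ 1 := by
  classical
  have hee : ∀ a b : ℤ, ⟪(e a : X), (e b : X)⟫ = if a = b then 1 else 0 :=
    orthonormal_iff_ite.mp e.orthonormal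
  have henorm : ∀ a : ℤ, ‖(e a : X)‖ = 1 := e.orthonormal.1
  obtain ⟨u, hu⟩ := hT
  set A : X →L[ℂ] X := ↑u⁻¹ with hA
  have hAT : ∀ x : X, A ((S + D) x) = x := by
    intro x
    rw [← hu, hA, ← ContinuousLinearMap.mul_apply, u.inv_mul, ContinuousLinearMap.one_apply]
  have hTA : ∀ x : X, (S + D) (A x) = x := by
    intro x
    rw [← hu, hA, ← ContinuousLinearMap.mul_apply, u.mul_inv, ContinuousLinearMap.one_apply]
  set α : ℤ → ℤ → ℂ := fun j i => ⟪(e j : X), A (e i)⟫ with hα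
  have hbound : ∀ j i : ℤ, ‖α j i‖ ≤ ‖A‖ := by
    intro j i
    rw [hα]
    calc ‖⟪(e j : X), A (e i)⟫‖ ≤ ‖(e j : X)‖ * ‖A (e i)‖ := norm_inner_le_norm _ _
      _ ≤ 1 * (‖A‖ * ‖(e i : X)‖) := by
          rw [henorm j]; exact mul_le_mul_of_nonneg_left (A.le_opNorm _) zero_le_one
      _ = ‖A‖ := by rw [henorm i]; ring
  have row : ∀ j i : ℤ, w (j-1) * α (j-1) i + d j * α j i = if j = i then 1 else 0 := by
    intro j i
    have h1 : ⟪(e j : X), (S + D) (A (e i))⟫ = if j = i then 1 else 0 := by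
      rw [hTA]; exact hee j i
    rw [ContinuousLinearMap.add_apply, inner_add_right, aux_inner_S' e w S hS,
      aux_inner_D' e d D hD] at h1
    simpa [hα] using h1
  have ht : ∀ i : ℤ, d i * α i i = d 0 * α 0 0 := by
    refine aux_int_const' (f := fun i => d i * α i i) ?_
    intro i
    have c1 : w i * α (i+1) (i+1) + d i * α (i+1) i = 0 := by
      have h2 : w i • A (e (i+1)) + d i • A (e i) = (e i : X) := by
        have h1 : (S + D) (e i) = w i • (e (i + 1) : X) + d i • (e i : X) := by
          simp [ContinuousLinearMap.add_apply, hS, hD]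
        have := hAT (e i)
        rwa [h1, map_add, map_smul, map_smul] at this
      have h3 := congrArg (fun y => ⟪(e (i+1) : X), y⟫) h2
      simp only [inner_add_right, inner_smul_right, hee] at h3
      rw [if_neg (by omega)] at h3
      simpa [hα] using h3
    have r1 := row (i+1) i
    rw [if_neg (by omega)] at r1
    rw [show (i : ℤ) + 1 - 1 = i from by ring] at r1
    have := mul_left_cancel₀ (hw i)
      (show w i * (d (i+1) * α (i+1) (i+1)) = w i * (d i * α i i) from by
        linear_combination d (i+1) * c1 - d i * r1)
    exact this
  set t : ℂ := d 0 * α 0 0 with htdef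
  by_cases hcase : (1:ℝ)/2 ≤ ‖t‖
  · -- forward case
    left
    refine aux_limsup _ (2 * ‖A‖₊) (Eventually.of_forall fun k => ?_)
    refine iSup_le fun i => ?_
    rw [show ((2 * ‖A‖₊ : NNReal) : ℝ≥0∞) = ((2 * ‖A‖₊ : NNReal) : ℝ≥0∞) from rfl,
      ENNReal.coe_le_coe, ← NNReal.coe_le_coe]
    push_cast
    have hf := aux_fwd' w d α t ht row k i
    have hdne : (∏ m ∈ range (k+1), d (i + (m:ℤ))) ≠ 0 :=
      Finset.prod_ne_zero_iff.mpr fun m _ => hd _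
    have key : (∏ m ∈ range k, w (i + (m:ℤ))) / (∏ m ∈ range (k+1), d (i + (m:ℤ))) * t
        = (-1:ℂ)^k * α (i + k) i := by
      rw [div_mul_eq_mul_div, div_eq_iff hdne]
      linear_combination hf
    have h2 : ‖(∏ m ∈ range k, w (i + (m:ℤ))) / (∏ m ∈ range (k+1), d (i + (m:ℤ)))‖ * ‖t‖
        ≤ ‖A‖ := by
      rw [← norm_mul, key, norm_mul, norm_pow, norm_neg, norm_one, one_pow, one_mul]
      exact hbound _ _
    nlinarith [norm_nonneg ((∏ m ∈ range k, w (i + (m:ℤ))) /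
      (∏ m ∈ range (k+1), d (i + (m:ℤ)))), norm_nonneg A, hcase, h2]
  · -- backward case
    right
    have hcase' : (1:ℝ)/2 ≤ ‖1 - t‖ := by
      have h1 : ‖(1:ℂ)‖ - ‖t‖ ≤ ‖1 - t‖ := norm_sub_norm_le _ _
      rw [norm_one] at h1
      linarith [not_le.mp hcase]
    refine aux_limsup _ (2 * ‖A‖₊) ?_
    filter_upwards [eventually_ge_atTop 1] with k hk
    obtain ⟨n, rfl⟩ := Nat.exists_eq_add_of_le hk
    refine iSup_le fun i => ?_
    rw [ENNReal.coe_le_coe, ← NNReal.coe_le_coe]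
    push_cast
    have hIccd : ∏ m ∈ Icc 1 (1 + n - 1), d (i - (m:ℤ)) = ∏ m ∈ range n, d (i - 1 - (m:ℤ)) := by
      rw [show 1 + n - 1 = n from by omega, ← Finset.Ico_add_one_right_eq_Icc,
        Finset.prod_Ico_eq_prod_range]
      rw [show n + 1 - 1 = n from by omega]
      exact Finset.prod_congr rfl fun m _ => congrArg d (by push_cast; ring)
    have hIccw : ∏ m ∈ Icc 1 (1 + n), w (i - (m:ℤ))
        = ∏ m ∈ range (n+1), w (i - 1 - (m:ℤ)) := by
      rw [← Finset.Ico_add_one_right_eq_Icc, Finset.prod_Ico_eq_prod_range,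
        show 1 + n + 1 - 1 = n + 1 from by omega]
      exact Finset.prod_congr rfl fun m _ => congrArg w (by push_cast; ring)
    rw [hIccd, hIccw]
    have hf := aux_bwd' w d α t ht row n i
    have hwne : (∏ m ∈ range (n+1), w (i - 1 - (m:ℤ))) ≠ 0 :=
      Finset.prod_ne_zero_iff.mpr fun m _ => hw _
    have key : (∏ m ∈ range n, d (i - 1 - (m:ℤ))) / (∏ m ∈ range (n+1), w (i - 1 - (m:ℤ)))
        * (1 - t) = (-1:ℂ)^n * α (i - 1 - n) i := by
      rw [div_mul_eq_mul_div, div_eq_iff hwne]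
      linear_combination hf
    have h2 : ‖(∏ m ∈ range n, d (i - 1 - (m:ℤ))) / (∏ m ∈ range (n+1), w (i - 1 - (m:ℤ)))‖
        * ‖1 - t‖ ≤ ‖A‖ := by
      rw [← norm_mul, key, norm_mul, norm_pow, norm_neg, norm_one, one_pow, one_mul]
      exact hbound _ _
    nlinarith [norm_nonneg ((∏ m ∈ range n, d (i - 1 - (m:ℤ))) /
      (∏ m ∈ range (n+1), w (i - 1 - (m:ℤ)))), norm_nonneg A, hcase', h2]
end

section
/- If S is an invertible bounded weighted shift operator on X, then σ(S) = { λ ∈ ℂ : 1/r(S⁻¹) ≤ |λ| ≤ r(S) }, where r denotes the spectral radius; i.e. the spectrum of S is the closed annulus with inner radius 1/r(S⁻¹) and outer radius r(S). -/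
set_option linter.unusedSectionVars false

open ENNReal Metric Complex Set Submodule Real

noncomputable section Aux

variable {X : Type*} [NormedAddCommGroup X] [InnerProductSpace ℂ X] [CompleteSpace X]

theorem clm_ext_basis (e : HilbertBasis ℤ ℂ X) {A B : X →L[ℂ] X}
    (h : ∀ i, A (e i) = B (e i)) : A = B :=
  ContinuousLinearMap.ext_on
    (Submodule.dense_iff_topologicalClosure_eq_top.2 e.dense_span)
    (by rintro _ ⟨i, rfl⟩; exact h i)

theorem rot_orthonormal (e : HilbertBasis ℤ ℂ X) (c : ℤ → ℂ) (hc : ∀ i, ‖c i‖ = 1) :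
    Orthonormal ℂ (fun i => c i • e i) := by
  rw [orthonormal_iff_ite]
  intro i j
  rw [inner_smul_left, inner_smul_right, orthonormal_iff_ite.1 e.orthonormal i j]
  by_cases h : i = j
  · subst h
    simp [RCLike.conj_mul, hc i]
  · simp [h]

theorem rot_span (e : HilbertBasis ℤ ℂ X) (c : ℤ → ℂ) (hc : ∀ i, ‖c i‖ = 1) :
    ⊤ ≤ (span ℂ (Set.range fun i => c i • e i)).topologicalClosure := by
  have hc0 : ∀ i, c i ≠ 0 := fun i h => by simpa [h] using hc i
  have h1 : (span ℂ (Set.range ⇑e)) ≤ span ℂ (Set.range fun i => c i • e i) := by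
    rw [Submodule.span_le]
    rintro _ ⟨i, rfl⟩
    have : (c i)⁻¹ • (c i • e i) ∈ span ℂ (Set.range fun i => c i • e i) :=
      Submodule.smul_mem _ _ (Submodule.subset_span ⟨i, rfl⟩)
    rwa [smul_smul, inv_mul_cancel₀ (hc0 i), one_smul] at this
  calc (⊤ : Submodule ℂ X) = (span ℂ (Set.range ⇑e)).topologicalClosure := e.dense_span.symm
  _ ≤ _ := Submodule.topologicalClosure_mono h1

def rotBasis (e : HilbertBasis ℤ ℂ X) (c : ℤ → ℂ) (hc : ∀ i, ‖c i‖ = 1) :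
    HilbertBasis ℤ ℂ X :=
  HilbertBasis.mk (rot_orthonormal e c hc) (rot_span e c hc)

theorem rotBasis_apply (e : HilbertBasis ℤ ℂ X) (c : ℤ → ℂ) (hc : ∀ i, ‖c i‖ = 1) (i : ℤ) :
    rotBasis e c hc i = c i • e i := by
  rw [show ⇑(rotBasis e c hc) = fun i => c i • e i from HilbertBasis.coe_mk _ _]

def diagIso (e : HilbertBasis ℤ ℂ X) (c : ℤ → ℂ) (hc : ∀ i, ‖c i‖ = 1) : X ≃ₗᵢ[ℂ] X :=
  e.repr.trans (rotBasis e c hc).repr.symm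

theorem diagIso_apply (e : HilbertBasis ℤ ℂ X) (c : ℤ → ℂ) (hc : ∀ i, ‖c i‖ = 1) (i : ℤ) :
    diagIso e c hc (e i) = c i • e i := by
  classical
  rw [diagIso, LinearIsometryEquiv.trans_apply, HilbertBasis.repr_self,
    ← HilbertBasis.repr_self (rotBasis e c hc) i, LinearIsometryEquiv.symm_apply_apply,
    rotBasis_apply]

def diagUnit (e : HilbertBasis ℤ ℂ X) (c : ℤ → ℂ) (hc : ∀ i, ‖c i‖ = 1) : (X →L[ℂ] X)ˣ where
  val := ((diagIso e c hc).toContinuousLinearEquiv : X →L[ℂ] X)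
  inv := ((diagIso e c hc).symm.toContinuousLinearEquiv : X →L[ℂ] X)
  val_inv := by ext x; simp
  inv_val := by ext x; simp

theorem diagUnit_apply (e : HilbertBasis ℤ ℂ X) (c : ℤ → ℂ) (hc : ∀ i, ‖c i‖ = 1) (x : X) :
    (diagUnit e c hc : X →L[ℂ] X) x = diagIso e c hc x := rfl

theorem diagUnit_inv_apply (e : HilbertBasis ℤ ℂ X) (c : ℤ → ℂ) (hc : ∀ i, ‖c i‖ = 1) (x : X) :
    ((diagUnit e c hc)⁻¹ : (X →L[ℂ] X)ˣ).val x = (diagIso e c hc).symm x := rfl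


section Conj

variable (e : HilbertBasis ℤ ℂ X)

/-- the unimodular weights for rotation by angle θ -/
def rotW (θ : ℝ) : ℤ → ℂ := fun i => Complex.exp (θ * I) ^ i

theorem rotW_norm (θ : ℝ) : ∀ i, ‖rotW θ i‖ = 1 := by
  intro i
  rw [rotW, norm_zpow, Complex.norm_exp_ofReal_mul_I, one_zpow]

theorem rotW_ne_zero (θ : ℝ) (i : ℤ) : rotW θ i ≠ 0 := fun h => by
  simpa [h] using rotW_norm θ i

theorem rotW_succ (θ : ℝ) (i : ℤ) : rotW θ (i + 1) = Complex.exp (θ * I) * rotW θ i := by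
  rw [rotW, rotW, zpow_add_one₀ (Complex.exp_ne_zero _), mul_comm]

/-- the rotation unitary -/
def rotU (θ : ℝ) : (X →L[ℂ] X)ˣ := diagUnit e (rotW θ) (rotW_norm θ)

theorem rotU_apply (θ : ℝ) (i : ℤ) : (rotU e θ : X →L[ℂ] X) (e i) = rotW θ i • e i := by
  rw [rotU, diagUnit_apply, diagIso_apply]

theorem rotU_inv_apply (θ : ℝ) (i : ℤ) :
    ((rotU e θ)⁻¹ : (X →L[ℂ] X)ˣ).val (e i) = (rotW θ i)⁻¹ • e i := by
  have h : diagIso e (rotW θ) (rotW_norm θ) ((rotW θ i)⁻¹ • e i) = e i := by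
    rw [map_smul, diagIso_apply, smul_smul, inv_mul_cancel₀ (rotW_ne_zero θ i), one_smul]
  rw [rotU, diagUnit_inv_apply]
  nth_rewrite 1 [← h]
  rw [LinearIsometryEquiv.symm_apply_apply]

variable {w : ℤ → ℂ} {S : X →L[ℂ] X} (hS : ∀ i : ℤ, S (e i) = w i • e (i + 1))

include hS in
theorem rotU_conj (θ : ℝ) :
    (rotU e θ : X →L[ℂ] X) * S * ((rotU e θ)⁻¹ : (X →L[ℂ] X)ˣ).val
      = Complex.exp (θ * I) • S := by
  apply clm_ext_basis e
  intro i
  rw [ContinuousLinearMap.mul_apply, ContinuousLinearMap.mul_apply, rotU_inv_apply, map_smul,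
    hS, map_smul, map_smul, rotU_apply, ContinuousLinearMap.smul_apply, hS,
    smul_smul, smul_smul, smul_smul]
  congr 1
  rw [rotW_succ]
  field_simp [rotW_ne_zero θ i]

include hS in
theorem resolventSet_rot {z : ℂ} (hz : z ∈ resolventSet ℂ S) (θ : ℝ) :
    Complex.exp (θ * I) * z ∈ resolventSet ℂ S := by
  rw [spectrum.mem_resolventSet_iff] at hz ⊢
  set u : ℂ := Complex.exp (θ * I) with hu
  have hu0 : u ≠ 0 := Complex.exp_ne_zero _
  set D : (X →L[ℂ] X)ˣ := rotU e (-θ) with hD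
  have hconj : (D : X →L[ℂ] X) * S * (D⁻¹ : (X →L[ℂ] X)ˣ).val = u⁻¹ • S := by
    rw [hD, rotU_conj e hS (-θ), hu, ← Complex.exp_neg]
    norm_num
  have expand : (D : X →L[ℂ] X) * (algebraMap ℂ (X →L[ℂ] X) z - S) * (D⁻¹ : (X →L[ℂ] X)ˣ).val
      = z • 1 - u⁻¹ • S := by
    rw [Algebra.algebraMap_eq_smul_one, mul_sub, sub_mul, hconj, mul_smul_comm, mul_one,
      smul_mul_assoc, Units.mul_inv]
  have key : algebraMap ℂ (X →L[ℂ] X) (u * z) - S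
      = u • ((D : X →L[ℂ] X) * (algebraMap ℂ (X →L[ℂ] X) z - S) * (D⁻¹ : (X →L[ℂ] X)ˣ).val) := by
    rw [expand, smul_sub, smul_smul, smul_smul, mul_inv_cancel₀ hu0, one_smul,
      Algebra.algebraMap_eq_smul_one]
  rw [key]
  have hDu : IsUnit ((D : X →L[ℂ] X) * (algebraMap ℂ (X →L[ℂ] X) z - S)
      * (D⁻¹ : (X →L[ℂ] X)ˣ).val) :=
    ((D.isUnit.mul hz).mul (D⁻¹).isUnit)
  exact (isUnit_smul_iff (Units.mk0 u hu0) _).2 hDu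

include hS in
theorem resolventSet_circle {z z' : ℂ} (hz : z ∈ resolventSet ℂ S) (h : ‖z'‖ = ‖z‖)
    (hz0 : z ≠ 0) : z' ∈ resolventSet ℂ S := by
  have hu : ‖z' / z‖ = 1 := by
    rw [norm_div, h,
      div_self (norm_ne_zero_iff.2 hz0)]
  have h1 : Complex.exp ((((z' / z).arg : ℝ) : ℂ) * I) = z' / z := by
    have h2 := Complex.norm_mul_exp_arg_mul_I (z' / z)
    rwa [hu, Complex.ofReal_one, one_mul] at h2
  have hz' : z' = Complex.exp ((((z' / z).arg : ℝ) : ℂ) * I) * z := by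
    rw [h1, div_mul_cancel₀ _ hz0]
  rw [hz']
  exact resolventSet_rot e hS hz _

end Conj


section CircleInt

variable {E : Type*} [NormedAddCommGroup E] [NormedSpace ℂ E] [CompleteSpace E]

theorem circleIntegral_comp_L {A : Type*} [NormedAddCommGroup A] [NormedSpace ℂ A]
    [CompleteSpace A] (L : A →L[ℂ] A) (f : ℂ → A) {c : ℂ} {t : ℝ}
    (hf : CircleIntegrable f c t) :
    (∮ z in C(c, t), L (f z)) = L (∮ z in C(c, t), f z) := by
  rw [circleIntegral, circleIntegral,
    ← ContinuousLinearMap.intervalIntegral_comp_comm L ((circleIntegrable_iff t).1 hf)]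
  congr 1
  funext s
  rw [ContinuousLinearMap.map_smul]

theorem circleIntegral_rot (f : ℂ → E) (t θ : ℝ) :
    (∮ z in C(0, t), Complex.exp (θ * I) • f (Complex.exp (θ * I) * z))
      = ∮ z in C(0, t), f z := by
  rw [circleIntegral, circleIntegral]
  set G : ℝ → E := fun s => deriv (circleMap 0 t) s • f (circleMap 0 t s) with hG
  have hGper : Function.Periodic G (2 * π) := fun s => by
    simp only [hG, deriv_circleMap]
    rw [show s + 2 * π = s + 2 * π from rfl, periodic_circleMap]
  have hcm : ∀ s : ℝ, circleMap 0 t (s + θ) = Complex.exp (θ * I) * circleMap 0 t s := by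
    intro s
    rw [circleMap_zero, circleMap_zero]
    push_cast
    rw [add_mul, Complex.exp_add]
    ring
  have hpt : ∀ s : ℝ, deriv (circleMap 0 t) s •
      (Complex.exp (θ * I) • f (Complex.exp (θ * I) * circleMap 0 t s)) = G (s + θ) := by
    intro s
    simp only [hG, deriv_circleMap]
    rw [smul_smul, hcm s]
    congr 1
    ring
  calc (∫ s in (0:ℝ)..2 * π, deriv (circleMap 0 t) s •
        (Complex.exp (θ * I) • f (Complex.exp (θ * I) * circleMap 0 t s)))
      = ∫ s in (0:ℝ)..2 * π, G (s + θ) := by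
        congr 1; funext s; exact hpt s
    _ = ∫ s in (0 + θ)..(2 * π + θ), G s := intervalIntegral.integral_comp_add_right G θ
    _ = ∫ s in θ..(θ + 2 * π), G s := by rw [zero_add, add_comm (2*π) θ]
    _ = ∫ s in (0:ℝ)..(0 + 2 * π), G s := hGper.intervalIntegral_add_eq θ 0
    _ = ∫ s in (0:ℝ)..2 * π, G s := by rw [zero_add]

theorem resolvent_continuousOn {A : Type*} [NormedRing A] [NormedAlgebra ℂ A] [CompleteSpace A]
    {S : A} {s : Set ℂ} (h : ∀ z ∈ s, z ∈ resolventSet ℂ S) :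
    ContinuousOn (resolvent S) s := fun z hz =>
  ((spectrum.hasDerivAt_resolvent (h z hz)).continuousAt).continuousWithinAt


theorem resolvent_comm {A : Type*} [NormedRing A] [NormedAlgebra ℂ A] [CompleteSpace A]
    {S : A} {z : ℂ} (hm : IsUnit (algebraMap ℂ A z - S)) :
    resolvent S z * S = S * resolvent S z := by
  have inv1 : resolvent S z * (algebraMap ℂ A z - S) = 1 := Ring.inverse_mul_cancel _ hm
  have inv2 : (algebraMap ℂ A z - S) * resolvent S z = 1 := Ring.mul_inverse_cancel _ hm
  have hms : S * (algebraMap ℂ A z - S) = (algebraMap ℂ A z - S) * S := by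
    rw [mul_sub, sub_mul, Algebra.algebraMap_eq_smul_one, mul_smul_comm, smul_mul_assoc,
      mul_one, one_mul]
  calc resolvent S z * S
      = resolvent S z * S * ((algebraMap ℂ A z - S) * resolvent S z) := by rw [inv2, mul_one]
    _ = resolvent S z * ((S * (algebraMap ℂ A z - S)) * resolvent S z) := by
        simp only [mul_assoc]
    _ = resolvent S z * (((algebraMap ℂ A z - S) * S) * resolvent S z) := by rw [hms]
    _ = (resolvent S z * (algebraMap ℂ A z - S)) * (S * resolvent S z) := by
        simp only [mul_assoc]
    _ = S * resolvent S z := by rw [inv1, one_mul]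

end CircleInt


section Scalar

theorem ringInverse_eq {A : Type*} [Ring A] {a b : A} (h1 : a * b = 1) (h2 : b * a = 1) :
    Ring.inverse a = b := by
  have h := Ring.inverse_unit (⟨a, b, h1, h2⟩ : Aˣ)
  simpa using h

variable (e : HilbertBasis ℤ ℂ X) {w : ℤ → ℂ} {S : X →L[ℂ] X}
  (hS : ∀ i : ℤ, S (e i) = w i • e (i + 1))

include hS in
theorem stepA {t : ℝ} (ht : 0 < t)
    (hsph : ∀ z ∈ sphere (0 : ℂ) t, z ∈ resolventSet ℂ S) (θ : ℝ) :
    (rotU e θ : X →L[ℂ] X) * (∮ z in C(0, t), resolvent S z)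
      * ((rotU e θ)⁻¹ : (X →L[ℂ] X)ˣ).val = ∮ z in C(0, t), resolvent S z := by
  set U : X →L[ℂ] X := (rotU e θ : X →L[ℂ] X) with hU
  set V : X →L[ℂ] X := ((rotU e θ)⁻¹ : (X →L[ℂ] X)ˣ).val with hV
  have hUV : U * V = 1 := (rotU e θ).mul_inv
  have hVU : V * U = 1 := (rotU e θ).inv_mul
  set u : ℂ := Complex.exp (θ * I) with hu
  have hu0 : u ≠ 0 := Complex.exp_ne_zero _
  have hcont : ContinuousOn (resolvent S) (sphere (0 : ℂ) t) := resolvent_continuousOn hsph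
  have hint : CircleIntegrable (resolvent S) 0 t := hcont.circleIntegrable ht.le
  -- pointwise conjugation
  have hpt : ∀ z ∈ sphere (0 : ℂ) t,
      U * resolvent S z * V = u⁻¹ • resolvent S (u⁻¹ * z) := by
    intro z hz
    have hz' : u⁻¹ * z ∈ sphere (0 : ℂ) t := by
      rw [mem_sphere_zero_iff_norm] at hz ⊢
      rw [norm_mul, norm_inv, hu, Complex.norm_exp_ofReal_mul_I, inv_one,
        one_mul, hz]
    have hm : IsUnit (algebraMap ℂ (X →L[ℂ] X) z - S) :=
      spectrum.mem_resolventSet_iff.1 (hsph z hz)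
    have hm' : IsUnit (algebraMap ℂ (X →L[ℂ] X) (u⁻¹ * z) - S) :=
      spectrum.mem_resolventSet_iff.1 (hsph _ hz')
    set M : X →L[ℂ] X := algebraMap ℂ (X →L[ℂ] X) z - S with hM
    set M' : X →L[ℂ] X := algebraMap ℂ (X →L[ℂ] X) (u⁻¹ * z) - S with hM'
    have key0 : U * M * V = u • M' := by
      rw [hM, hM', Algebra.algebraMap_eq_smul_one, Algebra.algebraMap_eq_smul_one, mul_sub,
        sub_mul, hU, hV, rotU_conj e hS θ, ← hu, mul_smul_comm, mul_one, smul_mul_assoc,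
        Units.mul_inv, smul_sub, smul_smul,
        show u * (u⁻¹ * z) = z from by field_simp]
    have inv1 : resolvent S z * M = 1 := Ring.inverse_mul_cancel _ hm
    have inv1' : resolvent S (u⁻¹ * z) * M' = 1 := Ring.inverse_mul_cancel _ hm'
    have inv2' : M' * resolvent S (u⁻¹ * z) = 1 := Ring.mul_inverse_cancel _ hm'
    have h3 : (U * resolvent S z * V) * (u • M') = 1 := by
      rw [← key0]
      simp only [mul_assoc]
      rw [← mul_assoc V U, hVU, one_mul, ← mul_assoc (resolvent S z) M, inv1, one_mul, hUV]
    have h5 : (u • M') * (u⁻¹ • resolvent S (u⁻¹ * z)) = 1 := by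
      rw [smul_mul_smul_comm, mul_inv_cancel₀ hu0, inv2', one_smul]
    calc U * resolvent S z * V
        = (U * resolvent S z * V) * 1 := (mul_one _).symm
      _ = (U * resolvent S z * V) * ((u • M') * (u⁻¹ • resolvent S (u⁻¹ * z))) := by rw [h5]
      _ = ((U * resolvent S z * V) * (u • M')) * (u⁻¹ • resolvent S (u⁻¹ * z)) :=
          (mul_assoc _ _ _).symm
      _ = 1 * (u⁻¹ • resolvent S (u⁻¹ * z)) := by rw [h3]
      _ = u⁻¹ • resolvent S (u⁻¹ * z) := one_mul _
  -- push conjugation through the integral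
  have hL : ∀ x : X →L[ℂ] X, ContinuousLinearMap.mulLeftRight ℂ (X →L[ℂ] X) U V x = U * x * V :=
    fun x => ContinuousLinearMap.mulLeftRight_apply ℂ (X →L[ℂ] X) U V x
  have step1 : U * (∮ z in C(0, t), resolvent S z) * V
      = ∮ z in C(0, t), U * resolvent S z * V := by
    rw [← hL]
    rw [← circleIntegral_comp_L (ContinuousLinearMap.mulLeftRight ℂ (X →L[ℂ] X) U V) _ hint]
    congr 1
  rw [step1]
  have step2 : (∮ z in C(0, t), U * resolvent S z * V)
      = ∮ z in C(0, t), u⁻¹ • resolvent S (u⁻¹ * z) :=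
    circleIntegral.integral_congr ht.le fun z hz => hpt z hz
  rw [step2]
  have hexp : Complex.exp ((-θ : ℝ) * I) = u⁻¹ := by
    rw [hu, ← Complex.exp_neg]
    congr 1
    push_cast
    ring
  have h6 := circleIntegral_rot (resolvent S) t (-θ)
  rw [hexp] at h6
  exact h6


theorem conj_eq_inv {c : ℂ} (hc : ‖c‖ = 1) : (starRingEnd ℂ) c = c⁻¹ := by
  apply eq_inv_of_mul_eq_one_left
  rw [mul_comm, Complex.mul_conj, Complex.normSq_eq_norm_sq]
  rw [hc]
  norm_num

include hS in
theorem stepQ {t : ℝ} (ht : 0 < t) (hw : ∀ i, w i ≠ 0)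
    (hsph : ∀ z ∈ sphere (0 : ℂ) t, z ∈ resolventSet ℂ S) :
    ∃ γ : ℂ, (∮ z in C(0, t), resolvent S z) = γ • (1 : X →L[ℂ] X) := by
  have hcont : ContinuousOn (resolvent S) (sphere (0 : ℂ) t) := resolvent_continuousOn hsph
  have hint : CircleIntegrable (resolvent S) 0 t := hcont.circleIntegrable ht.le
  set Q : X →L[ℂ] X := ∮ z in C(0, t), resolvent S z with hQdef
  have hcomm : ∀ θ : ℝ, (rotU e θ : X →L[ℂ] X) * Q = Q * (rotU e θ : X →L[ℂ] X) := by
    intro θ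
    have h : ((rotU e θ : X →L[ℂ] X) * Q * ((rotU e θ)⁻¹ : (X →L[ℂ] X)ˣ).val)
        * (rotU e θ : X →L[ℂ] X) = Q * (rotU e θ : X →L[ℂ] X) := by
      rw [stepA e hS ht hsph θ]
    rwa [mul_assoc ((rotU e θ : X →L[ℂ] X) * Q), (rotU e θ).inv_mul, mul_one] at h
  -- off-diagonal matrix elements vanish
  have hoff : ∀ j k : ℤ, j ≠ k → (inner ℂ (e j) (Q (e k)) : ℂ) = 0 := by
    intro j k hjk
    set θ : ℝ := π / ((j : ℝ) - (k : ℝ)) with hθ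
    have hjkR : (j : ℝ) - (k : ℝ) ≠ 0 := sub_ne_zero.2 (by exact_mod_cast hjk)
    have hUy : (rotU e θ : X →L[ℂ] X) (Q (e k)) = rotW θ k • Q (e k) := by
      have h := congrArg (fun T : X →L[ℂ] X => T (e k)) (hcomm θ)
      simp only [ContinuousLinearMap.mul_apply] at h
      rw [h, rotU_apply, map_smul]
    have hinner1 : (inner ℂ (e j) ((rotU e θ : X →L[ℂ] X) (Q (e k))) : ℂ)
        = rotW θ k * inner ℂ (e j) (Q (e k)) := by rw [hUy, inner_smul_right]
    have hinner2 : (inner ℂ (e j) ((rotU e θ : X →L[ℂ] X) (Q (e k))) : ℂ)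
        = rotW θ j * inner ℂ (e j) (Q (e k)) := by
      have hej : (diagIso e (rotW θ) (rotW_norm θ)) ((rotW θ j)⁻¹ • e j) = e j := by
        rw [map_smul, diagIso_apply, smul_smul, inv_mul_cancel₀ (rotW_ne_zero θ j), one_smul]
      have hU : (rotU e θ : X →L[ℂ] X) (Q (e k))
          = diagIso e (rotW θ) (rotW_norm θ) (Q (e k)) := rfl
      rw [hU]
      nth_rewrite 1 [← hej]
      rw [LinearIsometryEquiv.inner_map_map, inner_smul_left, map_inv₀,
        conj_eq_inv (rotW_norm θ j), inv_inv]
    have hne : rotW θ j ≠ rotW θ k := by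
      intro hEq
      have h7 : rotW θ j * (rotW θ k)⁻¹ = 1 := by rw [hEq, mul_inv_cancel₀ (rotW_ne_zero θ k)]
      rw [rotW, rotW, ← zpow_neg, ← zpow_add₀ (Complex.exp_ne_zero _),
        ← Complex.exp_int_mul] at h7
      have hjkC : ((j : ℂ) - (k : ℂ)) ≠ 0 := by
        intro hc
        apply hjkR
        have := congrArg Complex.re hc
        simpa using this
      have h8 : ((j + -k : ℤ) : ℂ) * ((θ : ℂ) * I) = (π : ℂ) * I := by
        push_cast
        rw [hθ]
        push_cast
        field_simp
        ring
      rw [h8, Complex.exp_pi_mul_I] at h7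
      norm_num at h7
    have h9 : (rotW θ j - rotW θ k) * (inner ℂ (e j) (Q (e k)) : ℂ) = 0 := by
      rw [sub_mul, ← hinner1, ← hinner2, sub_self]
    exact (mul_eq_zero.1 h9).resolve_left (sub_ne_zero.2 hne)
  -- Q is diagonal
  have hdiag : ∀ k : ℤ, Q (e k) = (inner ℂ (e k) (Q (e k)) : ℂ) • e k := by
    intro k
    apply e.repr.injective
    apply lp.ext
    funext j
    rw [map_smul]
    rw [show (⇑(e.repr (Q (e k))) j) = (inner ℂ (e j) (Q (e k)) : ℂ) from
      HilbertBasis.repr_apply_apply e _ j]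
    rw [lp.coeFn_smul, Pi.smul_apply,
      show (⇑(e.repr (e k)) j) = (inner ℂ (e j) (e k) : ℂ) from HilbertBasis.repr_apply_apply e _ j]
    rw [orthonormal_iff_ite.1 e.orthonormal j k]
    by_cases hjk : j = k
    · subst hjk
      rw [if_pos rfl, smul_eq_mul, mul_one]
    · rw [hoff j k hjk, if_neg hjk, smul_eq_mul, mul_zero]
  -- Q commutes with S
  have hQS : Q * S = S * Q := by
    have hRzS : ∀ z ∈ sphere (0 : ℂ) t, resolvent S z * S = S * resolvent S z := by
      intro z hz
      have hm : IsUnit (algebraMap ℂ (X →L[ℂ] X) z - S) :=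
        spectrum.mem_resolventSet_iff.1 (hsph z hz)
      have inv1 : resolvent S z * (algebraMap ℂ (X →L[ℂ] X) z - S) = 1 :=
        Ring.inverse_mul_cancel _ hm
      have inv2 : (algebraMap ℂ (X →L[ℂ] X) z - S) * resolvent S z = 1 :=
        Ring.mul_inverse_cancel _ hm
      have hms : S * (algebraMap ℂ (X →L[ℂ] X) z - S) = (algebraMap ℂ (X →L[ℂ] X) z - S) * S := by
        rw [mul_sub, sub_mul, Algebra.algebraMap_eq_smul_one, mul_smul_comm, smul_mul_assoc,
          mul_one, one_mul]
      calc resolvent S z * S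
          = resolvent S z * S * ((algebraMap ℂ (X →L[ℂ] X) z - S) * resolvent S z) := by
            rw [inv2, mul_one]
        _ = resolvent S z * ((S * (algebraMap ℂ (X →L[ℂ] X) z - S)) * resolvent S z) := by
            simp only [mul_assoc]
        _ = resolvent S z * (((algebraMap ℂ (X →L[ℂ] X) z - S) * S) * resolvent S z) := by
            rw [hms]
        _ = (resolvent S z * (algebraMap ℂ (X →L[ℂ] X) z - S)) * (S * resolvent S z) := by
            simp only [mul_assoc]
        _ = S * resolvent S z := by rw [inv1, one_mul]
    have h1 : Q * S = ∮ z in C(0, t), resolvent S z * S := by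
      have h := circleIntegral_comp_L ((ContinuousLinearMap.mul ℂ (X →L[ℂ] X)).flip S)
        (resolvent S) hint
      simp only [ContinuousLinearMap.flip_apply, ContinuousLinearMap.mul_apply'] at h
      exact h.symm
    have h2 : S * Q = ∮ z in C(0, t), S * resolvent S z := by
      have h := circleIntegral_comp_L (ContinuousLinearMap.mul ℂ (X →L[ℂ] X) S)
        (resolvent S) hint
      simp only [ContinuousLinearMap.mul_apply'] at h
      exact h.symm
    rw [h1, h2]
    exact circleIntegral.integral_congr ht.le fun z hz => hRzS z hz
  -- diagonal is constant
  set q : ℤ → ℂ := fun k => (inner ℂ (e k) (Q (e k)) : ℂ) with hq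
  have hstep : ∀ k : ℤ, q (k + 1) = q k := by
    intro k
    have h := congrArg (fun T : X →L[ℂ] X => T (e k)) hQS
    simp only [ContinuousLinearMap.mul_apply] at h
    rw [hS, map_smul, hdiag (k + 1), hdiag k, map_smul, hS, smul_smul, smul_smul] at h
    have h10 := smul_left_injective ℂ (e.orthonormal.ne_zero (k + 1)) h
    have h11 : w k * q (k + 1) = w k * q k := by rw [h10]; ring
    exact mul_left_cancel₀ (hw k) h11
  have hconst : ∀ k : ℤ, q k = q 0 := by
    intro k
    induction k using Int.induction_on with
    | zero => rfl
    | succ n ih => rw [hstep (n : ℤ), ih]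
    | pred n ih =>
      have h := hstep (-(n : ℤ) - 1)
      rw [show (-(n : ℤ) - 1 + 1) = -(n : ℤ) from by ring] at h
      rw [← h]
      exact ih
  refine ⟨q 0, clm_ext_basis e fun i => ?_⟩
  rw [hdiag i]
  rw [show (inner ℂ (e i) (Q (e i)) : ℂ) = q i from rfl, hconst i]
  simp


include hS in
theorem hard {t : ℝ} (ht : 0 < t) (hw : ∀ i, w i ≠ 0)
    (hsph : ∀ z ∈ sphere (0 : ℂ) t, z ∈ resolventSet ℂ S) :
    (∀ μ : ℂ, ‖μ‖ < t → μ ∈ resolventSet ℂ S) ∨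
    (∀ μ : ℂ, t < ‖μ‖ → μ ∈ resolventSet ℂ S) := by
  obtain ⟨γ, hγ⟩ := stepQ e hS ht hw hsph
  have hcont : ContinuousOn (resolvent S) (sphere (0 : ℂ) t) := resolvent_continuousOn hsph
  have hint : CircleIntegrable (resolvent S) 0 t := hcont.circleIntegrable ht.le
  have main : ∀ μ : ℂ, ‖μ‖ ≠ t → γ ≠ (∮ z in C(0, t), (z - μ)⁻¹) →
      μ ∈ resolventSet ℂ S := by
    intro μ hμt hγκ
    set κ : ℂ := ∮ z in C(0, t), (z - μ)⁻¹ with hκ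
    have hne : ∀ z ∈ sphere (0 : ℂ) t, z - μ ≠ 0 := by
      intro z hz hc
      rw [mem_sphere_zero_iff_norm] at hz
      exact hμt (by rw [← (sub_eq_zero.1 hc), hz])
    have hgc : ContinuousOn (fun z => (z - μ)⁻¹ • resolvent S z) (sphere (0 : ℂ) t) :=
      ((continuousOn_id.sub continuousOn_const).inv₀ hne).smul hcont
    have hgint : CircleIntegrable (fun z => (z - μ)⁻¹ • resolvent S z) 0 t :=
      hgc.circleIntegrable ht.le
    set B : X →L[ℂ] X := ∮ z in C(0, t), (z - μ)⁻¹ • resolvent S z with hB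
    have hpt : ∀ z ∈ sphere (0 : ℂ) t,
        ((z - μ)⁻¹ • resolvent S z) * (S - algebraMap ℂ (X →L[ℂ] X) μ)
          = resolvent S z - (z - μ)⁻¹ • 1 := by
      intro z hz
      have hm : IsUnit (algebraMap ℂ (X →L[ℂ] X) z - S) :=
        spectrum.mem_resolventSet_iff.1 (hsph z hz)
      have inv1 : resolvent S z * (algebraMap ℂ (X →L[ℂ] X) z - S) = 1 :=
        Ring.inverse_mul_cancel _ hm
      have hSmu : S - algebraMap ℂ (X →L[ℂ] X) μ
          = -(algebraMap ℂ (X →L[ℂ] X) z - S) + (z - μ) • 1 := by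
        rw [Algebra.algebraMap_eq_smul_one, Algebra.algebraMap_eq_smul_one, sub_smul]
        abel
      rw [hSmu, mul_add, mul_neg, smul_mul_assoc, inv1, smul_mul_smul_comm,
        inv_mul_cancel₀ (hne z hz), mul_one, one_smul]
      abel
    have hones : CircleIntegrable (fun z => (z - μ)⁻¹ • (1 : X →L[ℂ] X)) 0 t :=
      (((continuousOn_id.sub continuousOn_const).inv₀ hne).smul continuousOn_const).circleIntegrable
        ht.le
    have hBS : B * (S - algebraMap ℂ (X →L[ℂ] X) μ) = (γ - κ) • 1 := by
      have h := circleIntegral_comp_L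
        ((ContinuousLinearMap.mul ℂ (X →L[ℂ] X)).flip (S - algebraMap ℂ (X →L[ℂ] X) μ))
        (fun z => (z - μ)⁻¹ • resolvent S z) hgint
      simp only [ContinuousLinearMap.flip_apply, ContinuousLinearMap.mul_apply'] at h
      rw [← h, circleIntegral.integral_congr ht.le (fun z hz => hpt z hz),
        circleIntegral.integral_sub hint hones, circleIntegral.integral_smul_const, hγ, ← hκ,
        sub_smul]
    have hcommB : (S - algebraMap ℂ (X →L[ℂ] X) μ) * B = B * (S - algebraMap ℂ (X →L[ℂ] X) μ) := by
      have h1 := circleIntegral_comp_L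
        ((ContinuousLinearMap.mul ℂ (X →L[ℂ] X)).flip (S - algebraMap ℂ (X →L[ℂ] X) μ))
        (fun z => (z - μ)⁻¹ • resolvent S z) hgint
      have h2 := circleIntegral_comp_L
        (ContinuousLinearMap.mul ℂ (X →L[ℂ] X) (S - algebraMap ℂ (X →L[ℂ] X) μ))
        (fun z => (z - μ)⁻¹ • resolvent S z) hgint
      simp only [ContinuousLinearMap.flip_apply, ContinuousLinearMap.mul_apply'] at h1 h2
      rw [← h1, ← h2]
      apply circleIntegral.integral_congr ht.le
      intro z hz
      have hm : IsUnit (algebraMap ℂ (X →L[ℂ] X) z - S) :=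
        spectrum.mem_resolventSet_iff.1 (hsph z hz)
      have hc1 : (S - algebraMap ℂ (X →L[ℂ] X) μ) * resolvent S z
          = resolvent S z * (S - algebraMap ℂ (X →L[ℂ] X) μ) := by
        rw [sub_mul, mul_sub, resolvent_comm hm, Algebra.commutes]
      show (S - algebraMap ℂ (X →L[ℂ] X) μ) * ((z - μ)⁻¹ • resolvent S z)
          = ((z - μ)⁻¹ • resolvent S z) * (S - algebraMap ℂ (X →L[ℂ] X) μ)
      rw [mul_smul_comm, hc1, smul_mul_assoc]
    have hSB : (S - algebraMap ℂ (X →L[ℂ] X) μ) * B = (γ - κ) • 1 := by rw [hcommB, hBS]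
    have hδ : γ - κ ≠ 0 := sub_ne_zero.2 hγκ
    refine spectrum.mem_resolventSet_iff.2 ⟨⟨algebraMap ℂ (X →L[ℂ] X) μ - S,
      -((γ - κ)⁻¹ • B), ?_, ?_⟩, rfl⟩
    · show (algebraMap ℂ (X →L[ℂ] X) μ - S) * -((γ - κ)⁻¹ • B) = 1
      rw [mul_neg, ← neg_sub S (algebraMap ℂ (X →L[ℂ] X) μ), neg_mul, neg_neg, mul_smul_comm,
        hSB, smul_smul, inv_mul_cancel₀ hδ, one_smul]
    · show -((γ - κ)⁻¹ • B) * (algebraMap ℂ (X →L[ℂ] X) μ - S) = 1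
      rw [neg_mul, ← neg_sub S (algebraMap ℂ (X →L[ℂ] X) μ), mul_neg, neg_neg, smul_mul_assoc,
        hBS, smul_smul, inv_mul_cancel₀ hδ, one_smul]
  by_cases hγ2 : γ = 2 * ↑π * I
  · right
    intro μ hμ
    have hκ0 : (∮ z in C(0, t), (z - μ)⁻¹) = 0 := by
      have hne' : ∀ z ∈ closedBall (0 : ℂ) t, z - μ ≠ 0 := by
        intro z hz hc
        rw [mem_closedBall_zero_iff] at hz
        rw [sub_eq_zero.1 hc] at hz
        exact absurd hμ (not_lt.2 hz)
      apply circleIntegral_eq_zero_of_differentiable_on_off_countable ht.le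
        Set.countable_empty
        ((continuousOn_id.sub continuousOn_const).inv₀ hne')
      intro z hz
      exact (differentiableAt_id.sub_const μ).inv
        (hne' z (ball_subset_closedBall hz.1))
    apply main μ (ne_of_gt hμ)
    rw [hκ0, hγ2]
    exact Complex.two_pi_I_ne_zero
  · left
    intro μ hμ
    have hκ2 : (∮ z in C(0, t), (z - μ)⁻¹) = 2 * ↑π * I :=
      circleIntegral.integral_sub_inv_of_mem_ball (by rwa [mem_ball_zero_iff])
    apply main μ (ne_of_lt hμ)
    rw [hκ2]
    exact hγ2

end Scalar

end Aux

/-- If `S` is an invertible bounded weighted shift operator, then its spectrum is the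
closed annulus `{λ : 1/r(S⁻¹) ≤ |λ| ≤ r(S)}`, where `r` denotes the spectral radius. -/
theorem spectrum_invertible_weighted_shift_annulus
    {X : Type*} [NormedAddCommGroup X] [InnerProductSpace ℂ X] [CompleteSpace X]
    (e : HilbertBasis ℤ ℂ X) (w : ℤ → ℂ)
    (S Sinv : X →L[ℂ] X) (hS : ∀ i : ℤ, S (e i) = w i • e (i + 1))
    (h1 : S ∘L Sinv = 1) (h2 : Sinv ∘L S = 1) :
    spectrum ℂ S = {z : ℂ |
      (spectralRadius ℂ Sinv)⁻¹ ≤ (‖z‖₊ : ℝ≥0∞) ∧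
      (‖z‖₊ : ℝ≥0∞) ≤ spectralRadius ℂ S} := by
  haveI : Nontrivial X := ⟨⟨e 0, 0, e.orthonormal.ne_zero 0⟩⟩
  have h1' : S * Sinv = 1 := h1
  have h2' : Sinv * S = 1 := h2
  set SU : (X →L[ℂ] X)ˣ := ⟨S, Sinv, h1', h2'⟩ with hSU
  have hw : ∀ i, w i ≠ 0 := by
    intro i hwi
    have h := congrArg (fun T : X →L[ℂ] X => T (e i)) h2'
    simp only [ContinuousLinearMap.mul_apply, ContinuousLinearMap.one_apply] at h
    rw [hS, hwi, zero_smul, map_zero] at h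
    exact e.orthonormal.ne_zero i h.symm
  have hrfin : spectralRadius ℂ Sinv ≠ ⊤ :=
    ((spectrum.spectralRadius_le_nnnorm Sinv).trans_lt ENNReal.coe_lt_top).ne
  ext z
  simp only [Set.mem_setOf_eq]
  constructor
  · intro hz
    have hz0 : z ≠ 0 := spectrum.ne_zero_of_mem_of_unit (a := SU) hz
    constructor
    · have hzinv : z⁻¹ ∈ spectrum ℂ Sinv := by
        exact (spectrum.inv_mem_iff (r := Units.mk0 z hz0) (a := SU)).1 hz
      have hle : (‖z⁻¹‖₊ : ℝ≥0∞) ≤ spectralRadius ℂ Sinv :=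
        le_iSup₂ (f := fun k (_ : k ∈ spectrum ℂ Sinv) => (‖k‖₊ : ℝ≥0∞)) z⁻¹ hzinv
      rw [nnnorm_inv, ENNReal.coe_inv (nnnorm_ne_zero_iff.2 hz0)] at hle
      exact ENNReal.inv_le_iff_inv_le.1 hle
    · exact le_iSup₂ (f := fun k (_ : k ∈ spectrum ℂ S) => (‖k‖₊ : ℝ≥0∞)) z hz
  · rintro ⟨hlow, hup⟩
    by_contra hz
    have hzres : z ∈ resolventSet ℂ S :=
      spectrum.mem_resolventSet_iff.2 (spectrum.notMem_iff.1 hz)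
    have hz0 : z ≠ 0 := by
      intro h0
      rw [h0] at hlow
      simp only [nnnorm_zero, ENNReal.coe_zero, le_zero_iff, ENNReal.inv_eq_zero] at hlow
      exact hrfin hlow
    set t : ℝ := ‖z‖ with htdef
    have ht : 0 < t := norm_pos_iff.2 hz0
    have hsph : ∀ z' ∈ Metric.sphere (0 : ℂ) t, z' ∈ resolventSet ℂ S := by
      intro z' hz'
      rw [mem_sphere_zero_iff_norm] at hz'
      exact resolventSet_circle e hS hzres hz' hz0
    rcases hard e hS ht hw hsph with hcase | hcase
    · obtain ⟨ν, hνσ, hνr⟩ := spectrum.exists_nnnorm_eq_spectralRadius (a := Sinv)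
      have hν0 : ν ≠ 0 := spectrum.ne_zero_of_mem_of_unit (a := SU⁻¹) (by exact hνσ)
      have hμσ : ν⁻¹ ∈ spectrum ℂ S :=
        (spectrum.inv_mem_iff (r := Units.mk0 ν hν0) (a := SU⁻¹)).1 hνσ
      have hμle : (‖ν⁻¹‖₊ : ℝ≥0∞) ≤ (‖z‖₊ : ℝ≥0∞) := by
        rw [nnnorm_inv, ENNReal.coe_inv (nnnorm_ne_zero_iff.2 hν0), hνr]
        exact hlow
      have hμt : ‖ν⁻¹‖ ≤ t := by
        rw [htdef]
        exact_mod_cast hμle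
      have hμρ : ν⁻¹ ∈ resolventSet ℂ S := by
        rcases lt_or_eq_of_le hμt with hlt | heq
        · exact hcase ν⁻¹ hlt
        · exact hsph ν⁻¹ (mem_sphere_zero_iff_norm.2 heq)
      exact (spectrum.mem_iff.1 hμσ) (spectrum.mem_resolventSet_iff.1 hμρ)
    · obtain ⟨ρ', hρσ, hρr⟩ := spectrum.exists_nnnorm_eq_spectralRadius (a := S)
      have hρle : (‖z‖₊ : ℝ≥0∞) ≤ (‖ρ'‖₊ : ℝ≥0∞) := by rw [hρr]; exact hup
      have hρt : t ≤ ‖ρ'‖ := by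
        rw [htdef]
        exact_mod_cast hρle
      have hρρ : ρ' ∈ resolventSet ℂ S := by
        rcases lt_or_eq_of_le hρt with hlt | heq
        · exact hcase ρ' hlt
        · exact hsph ρ' (mem_sphere_zero_iff_norm.2 heq.symm)
      exact (spectrum.mem_iff.1 hρσ) (spectrum.mem_resolventSet_iff.1 hρρ)
end

section
/- Let n ≥ 1 be an integer, let S_n be the bounded weighted n-shift with bounded weights {w_i}_{i∈ℤ} (S_n e_i = w_i e_{i+n}) and D the bounded diagonal operator with bounded diagonals {d_i}_{i∈ℤ} (D e_i = d_i e_i). For each j ∈ {0,…,n−1}, let T_j be the bounded operator on X acting by T_j e_i = w_{j+in} e_{i+1} + d_{j+in} e_i for all i ∈ ℤ (the weighted shift with weights {w_{j+in}}_{i∈ℤ} plus the diagonal with entries {d_{j+in}}_{i∈ℤ}). Then σ(S_n + D) = σ(T_0) ∪ σ(T_1) ∪ ⋯ ∪ σ(T_{n−1}). -/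
local notation "⟪" x ", " y "⟫" => @inner ℂ _ _ x y

theorem hilbert_ext' {X : Type*} [NormedAddCommGroup X] [InnerProductSpace ℂ X]
    {Y : Type*} [NormedAddCommGroup Y] [NormedSpace ℂ Y]
    (e : HilbertBasis ℤ ℂ X) {f g : X →L[ℂ] Y} (h : ∀ i, f (e i) = g (e i)) : f = g := by
  have hd : Dense (Submodule.span ℂ (Set.range (⇑e)) : Set X) :=
    Submodule.dense_iff_topologicalClosure_eq_top.mpr e.dense_span
  refine ContinuousLinearMap.ext_on hd ?_
  rintro x ⟨i, rfl⟩
  exact h i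

theorem hilbert_ext_inner' {X : Type*} [NormedAddCommGroup X] [InnerProductSpace ℂ X]
    (e : HilbertBasis ℤ ℂ X) {x y : X}
    (h : ∀ i, ⟪x, (e i : X)⟫ = ⟪y, (e i : X)⟫) : x = y := by
  have h2 : innerSL ℂ x = innerSL ℂ y := hilbert_ext' e (fun i => h i)
  refine ext_inner_right ℂ (fun v => ?_)
  simpa using congrFun (congrArg (⇑) h2) v


open ContinuousLinearMap in
/-- Purely algebraic: if `a` is intertwined with a family `T j` via `V j, Vs j` with
`Vs j * V j = 1` and `∑ j, V j * Vs j = 1`, then `σ(a) = ⋃ σ(T j)`. -/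
theorem aux_spectrum_union {A : Type*} [Ring A] [Algebra ℂ A] (a : A) {n : ℕ}
    (T V Vs : Fin n → A)
    (h1 : ∀ j, Vs j * V j = 1) (h2 : ∑ j : Fin n, V j * Vs j = 1)
    (h3 : ∀ j, a * V j = V j * T j) (h4 : ∀ j, Vs j * a = T j * Vs j) :
    spectrum ℂ a = ⋃ j : Fin n, spectrum ℂ (T j) := by
  have key : ∀ z : ℂ, IsUnit (algebraMap ℂ A z - a) ↔
      ∀ j, IsUnit (algebraMap ℂ A z - T j) := by
    intro z
    set c : A := algebraMap ℂ A z with hc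
    have hcV : ∀ j, (c - a) * V j = V j * (c - T j) := by
      intro j
      rw [sub_mul, mul_sub, h3, show c * V j = V j * c from Algebra.commutes z (V j)]
    have hcVs : ∀ j, Vs j * (c - a) = (c - T j) * Vs j := by
      intro j
      rw [mul_sub, sub_mul, h4, show Vs j * c = c * Vs j from (Algebra.commutes z (Vs j)).symm]
    constructor
    · rintro hu j
      obtain ⟨b, hb1, hb2⟩ := isUnit_iff_exists.mp hu
      refine isUnit_iff_exists.mpr ⟨Vs j * b * V j, ?_, ?_⟩
      · calc (c - T j) * (Vs j * b * V j) = ((c - T j) * Vs j) * b * V j := by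
              simp only [mul_assoc]
          _ = (Vs j * (c - a)) * b * V j := by rw [hcVs j]
          _ = Vs j * ((c - a) * b) * V j := by simp only [mul_assoc]
          _ = Vs j * V j := by rw [hb1, mul_one]
          _ = 1 := h1 j
      · calc (Vs j * b * V j) * (c - T j) = Vs j * b * (V j * (c - T j)) := by
              simp only [mul_assoc]
          _ = Vs j * b * ((c - a) * V j) := by rw [← hcV j]
          _ = Vs j * (b * (c - a)) * V j := by simp only [mul_assoc]
          _ = Vs j * V j := by rw [hb2, mul_one]
          _ = 1 := h1 j
    · intro hu
      choose R hR1 hR2 using fun j => isUnit_iff_exists.mp (hu j)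
      refine isUnit_iff_exists.mpr ⟨∑ j : Fin n, V j * R j * Vs j, ?_, ?_⟩
      · rw [Finset.mul_sum]
        have hterm : ∀ j ∈ Finset.univ, (c - a) * (V j * R j * Vs j) = V j * Vs j := by
          intro j _
          calc (c - a) * (V j * R j * Vs j) = ((c - a) * V j) * (R j * Vs j) := by
                simp only [mul_assoc]
            _ = (V j * (c - T j)) * (R j * Vs j) := by rw [hcV j]
            _ = V j * (((c - T j) * R j) * Vs j) := by simp only [mul_assoc]
            _ = V j * Vs j := by rw [hR1 j, one_mul]
        rw [Finset.sum_congr rfl hterm, h2]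
      · rw [Finset.sum_mul]
        have hterm : ∀ j ∈ Finset.univ, (V j * R j * Vs j) * (c - a) = V j * Vs j := by
          intro j _
          calc (V j * R j * Vs j) * (c - a) = V j * (R j * (Vs j * (c - a))) := by
                simp only [mul_assoc]
            _ = V j * (R j * ((c - T j) * Vs j)) := by rw [hcVs j]
            _ = V j * ((R j * (c - T j)) * Vs j) := by simp only [mul_assoc]
            _ = V j * Vs j := by rw [hR2 j, one_mul]
        rw [Finset.sum_congr rfl hterm, h2]
  ext z
  simp only [Set.mem_iUnion, spectrum.mem_iff, key z, not_forall]

/-- Spectrum of a perturbed weighted `n`-shift: with `S_n e_i = w_i e_{i+n}` and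
`D e_i = d_i e_i`, and for each `j ∈ {0, …, n-1}` the operator `T_j` acting by
`T_j e_i = w_{j+in} e_{i+1} + d_{j+in} e_i` (the weighted shift with weights
`{w_{j+in}}_i` plus the diagonal with entries `{d_{j+in}}_i`), we have
`σ(S_n + D) = σ(T_0) ∪ ⋯ ∪ σ(T_{n-1})`. -/
theorem spectrum_perturbed_n_shift
    {X : Type*} [NormedAddCommGroup X] [InnerProductSpace ℂ X] [CompleteSpace X]
    (e : HilbertBasis ℤ ℂ X) (n : ℕ) (hn : 1 ≤ n) (w d : ℤ → ℂ)
    (Sn D : X →L[ℂ] X)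
    (hSn : ∀ i : ℤ, Sn (e i) = w i • e (i + n))
    (hD : ∀ i : ℤ, D (e i) = d i • e i)
    (T : Fin n → X →L[ℂ] X)
    (hT : ∀ (j : Fin n) (i : ℤ),
      T j (e i) = w ((j : ℤ) + i * n) • e (i + 1) + d ((j : ℤ) + i * n) • e i) :
    spectrum ℂ (Sn + D) = ⋃ j : Fin n, spectrum ℂ (T j) := by
  classical
  have hn0 : (n : ℤ) ≠ 0 := by exact_mod_cast (Nat.one_le_iff_ne_zero.mp hn)
  have hnpos : (0 : ℤ) < n := by exact_mod_cast hn
  -- injectivity of i ↦ j + i * n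
  have hinj : ∀ j : Fin n, Function.Injective (fun i : ℤ => (j : ℤ) + i * n) := by
    intro j a b hab
    simp only at hab
    have : a * (n : ℤ) = b * n := by linarith
    exact mul_right_cancel₀ hn0 this
  have hON : ∀ j : Fin n, Orthonormal ℂ (fun i : ℤ => (e ((j : ℤ) + i * n) : X)) :=
    fun j => e.orthonormal.comp _ (hinj j)
  have hee : ∀ a b : ℤ, ⟪(e a : X), (e b : X)⟫ = if a = b then (1 : ℂ) else 0 :=
    fun a b => orthonormal_iff_ite.mp e.orthonormal a b
  -- the isometries
  set V : Fin n → X →L[ℂ] X := fun j =>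
    (((hON j).orthogonalFamily.linearIsometry).comp e.repr.toLinearIsometry).toContinuousLinearMap
    with hVdef
  have hV : ∀ (j : Fin n) (i : ℤ), V j (e i) = e ((j : ℤ) + i * n) := by
    intro j i
    show ((hON j).orthogonalFamily.linearIsometry) (e.repr (e i)) = _
    rw [e.repr_self, OrthogonalFamily.linearIsometry_apply_single,
      LinearIsometry.toSpanSingleton_apply, one_smul]
  have hVinner : ∀ (j : Fin n) (x y : X), ⟪V j x, V j y⟫ = ⟪x, y⟫ := by
    intro j x y
    exact LinearIsometry.inner_map_map _ x y
  set Vs : Fin n → X →L[ℂ] X := fun j => ContinuousLinearMap.adjoint (V j) with hVsdef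
  have hVs_inner : ∀ (j : Fin n) (x y : X), ⟪Vs j x, y⟫ = ⟪x, V j y⟫ := fun j x y =>
    ContinuousLinearMap.adjoint_inner_left (V j) y x
  -- adjoint on basis vectors
  have hVs1 : ∀ (j : Fin n) (i : ℤ), Vs j (e ((j : ℤ) + i * n)) = e i := by
    intro j i
    refine hilbert_ext_inner' e (fun m => ?_)
    rw [hVs_inner, hV, hee, hee]
    by_cases h : i = m
    · simp [h]
    · rw [if_neg (fun hc => h (hinj j hc)), if_neg h]
  have hVs0 : ∀ (j : Fin n) (k : ℤ), (j : ℤ) ≠ k % n → Vs j (e k) = 0 := by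
    intro j k hjk
    refine hilbert_ext_inner' e (fun m => ?_)
    rw [hVs_inner, hV, hee, if_neg, inner_zero_left]
    intro hc
    apply hjk
    rw [hc, Int.add_mul_emod_self_right]
    exact (Int.emod_eq_of_lt (by exact_mod_cast Nat.zero_le _)
      (by exact_mod_cast j.isLt)).symm
  -- the four identities
  have h1 : ∀ j : Fin n, Vs j * V j = 1 := by
    intro j
    refine ContinuousLinearMap.ext (fun x => ?_)
    refine ext_inner_right ℂ (fun v => ?_)
    rw [ContinuousLinearMap.mul_apply, ContinuousLinearMap.one_apply, hVs_inner, hVinner]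
  have h2 : ∑ j : Fin n, V j * Vs j = 1 := by
    refine hilbert_ext' e (fun k => ?_)
    have hmodlt : k % (n : ℤ) < n := Int.emod_lt_of_pos k hnpos
    have hmodnn : (0 : ℤ) ≤ k % n := Int.emod_nonneg k hn0
    set j₀ : Fin n := ⟨(k % (n : ℤ)).toNat, by omega⟩ with hj₀def
    have hj₀k : (j₀ : ℤ) = k % n := by
      simp only [hj₀def]
      exact_mod_cast Int.toNat_of_nonneg hmodnn
    have hk : (j₀ : ℤ) + (k / n) * n = k := by
      rw [hj₀k, mul_comm]
      exact Int.emod_add_mul_ediv k n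
    rw [ContinuousLinearMap.sum_apply, ContinuousLinearMap.one_apply,
      Finset.sum_eq_single j₀]
    · have hvs : Vs j₀ (e k) = e (k / n) := by
        have := hVs1 j₀ (k / n); rwa [hk] at this
      rw [ContinuousLinearMap.mul_apply, hvs, hV, hk]
    · intro j _ hj
      rw [ContinuousLinearMap.mul_apply, hVs0 j k, map_zero]
      intro hc
      exact hj (Fin.ext (by exact_mod_cast hc.trans hj₀k.symm))
    · simp
  have h3 : ∀ j : Fin n, (Sn + D) * V j = V j * T j := by
    intro j
    refine hilbert_ext' e (fun i => ?_)
    rw [ContinuousLinearMap.mul_apply, ContinuousLinearMap.mul_apply, hV,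
      ContinuousLinearMap.add_apply, hSn, hD, hT, map_add (V j), map_smul, map_smul, hV, hV,
      show (j : ℤ) + i * n + n = (j : ℤ) + (i + 1) * n by ring]
  have h4 : ∀ j : Fin n, Vs j * (Sn + D) = T j * Vs j := by
    intro j
    refine hilbert_ext' e (fun k => ?_)
    rw [ContinuousLinearMap.mul_apply, ContinuousLinearMap.mul_apply,
      ContinuousLinearMap.add_apply, hSn, hD, map_add, map_smul, map_smul]
    by_cases hc : (j : ℤ) = k % n
    · have hk : (j : ℤ) + (k / n) * n = k := by
        rw [hc, mul_comm]; exact Int.emod_add_mul_ediv k n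
      have hv1 : Vs j (e k) = e (k / n) := by
        have := hVs1 j (k / n); rwa [hk] at this
      have hv2 : Vs j (e (k + n)) = e (k / n + 1) := by
        have := hVs1 j (k / n + 1)
        rwa [show (j : ℤ) + (k / n + 1) * n = k + n by rw [add_mul, one_mul, ← add_assoc, hk]] at this
      rw [hv1, hv2, hT, hk]
    · have hv1 : Vs j (e k) = 0 := hVs0 j k hc
      have hv2 : Vs j (e (k + n)) = 0 := by
        refine hVs0 j (k + n) ?_
        rwa [show k + (n : ℤ) = k + 1 * n by ring, Int.add_mul_emod_self_right]
      rw [hv1, hv2, smul_zero, smul_zero, add_zero, map_zero]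
  exact aux_spectrum_union (Sn + D) T V Vs h1 h2 h3 h4
end
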